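/- arXiv:2007.00964 — 4 statements merged into one kernel-verified Lean document; each statement's English description precedes it below -/
import Mathlib

section
/- (Fractional Riemann–Lebesgue lemma) For every f ∈ L^1(R) and α not an integer multiple of π, |(F_α f)(x)| → 0 as |x| → ∞. -/
open MeasureTheory Complex Real Filter

noncomputable def Aa (α : ℝ) : ℂ := (1 - Complex.I * (Real.cot α : ℂ)) ^ ((1 : ℂ)/2)

noncomputable def frftKernel (α : ℝ) (x t : ℝ) : ℂ :=
  Aa α * Complex.exp (2 * Real.pi * Complex.I *
    (((t : ℂ)^2/2) * (Real.cot α : ℂ) - (x : ℂ) * (t : ℂ) * ((Real.sin α : ℂ))⁻¹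
      + ((x : ℂ)^2/2) * (Real.cot α : ℂ)))

noncomputable def frft (α : ℝ) (f : ℝ → ℂ) (x : ℝ) : ℂ :=
  ∫ t : ℝ, frftKernel α x t * f t

theorem frft_riemann_lebesgue (f : ℝ → ℂ) (hf : Integrable f) (α : ℝ)
    (hα : ∀ n : ℤ, α ≠ n * Real.pi) :
    Tendsto (fun x : ℝ => ‖frft α f x‖) (Filter.cocompact ℝ) (nhds 0) := by
  have hs : Real.sin α ≠ 0 := by
    rw [Real.sin_ne_zero_iff]
    intro n h
    exact hα n h.symm
  set c : ℝ := Real.cot α with hc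
  set g : ℝ → ℂ := fun t => Complex.exp (2 * Real.pi * Complex.I * (((t : ℂ)^2/2) * (c : ℂ))) * f t with hg
  -- key factorization
  have key : ∀ x : ℝ, frft α f x
      = Aa α * Complex.exp (2 * Real.pi * Complex.I * (((x : ℂ)^2/2) * (c : ℂ)))
        * FourierTransform.fourier g (x / Real.sin α) := by
    intro x
    rw [Real.fourier_real_eq_integral_exp_smul]
    rw [frft, ← integral_const_mul]
    congr 1
    ext t
    simp only [frftKernel, smul_eq_mul, hg]
    have hexp : ∀ a b c' : ℂ, Aa α * Complex.exp a * (Complex.exp b * (Complex.exp c' * f t))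
        = Aa α * Complex.exp (a + b + c') * f t := by
      intro a b c'
      rw [Complex.exp_add, Complex.exp_add]; ring
    rw [hexp]
    congr 3
    simp only [hc]
    push_cast [← Complex.ofReal_cot]
    field_simp
    ring
  have hnorm : ∀ x : ℝ, ‖frft α f x‖
      = ‖Aa α‖ * ‖FourierTransform.fourier g (x / Real.sin α)‖ := by
    intro x
    rw [key x, norm_mul, norm_mul]
    have : ‖Complex.exp (2 * Real.pi * Complex.I * (((x : ℂ)^2/2) * (c : ℂ)))‖ = 1 := by
      have h1 : 2 * Real.pi * Complex.I * (((x : ℂ)^2/2) * (c : ℂ))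
          = ((Real.pi * x^2 * c : ℝ) : ℂ) * Complex.I := by push_cast; ring
      rw [h1, Complex.norm_exp_ofReal_mul_I]
    rw [this, mul_one]
  have hmap : Tendsto (fun x : ℝ => x / Real.sin α) (cocompact ℝ) (cocompact ℝ) := by
    have h := (Homeomorph.mulRight₀ (Real.sin α)⁻¹ (inv_ne_zero hs)).map_cocompact
    refine Tendsto.congr (fun x => ?_) (h ▸ tendsto_map)
    simp [Homeomorph.mulRight₀, div_eq_mul_inv]; rfl
  have h1 : Tendsto (fun x : ℝ => FourierTransform.fourier g (x / Real.sin α))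
      (cocompact ℝ) (nhds 0) :=
    (Real.zero_at_infty_fourier g).comp hmap
  have h2 : Tendsto (fun x : ℝ => ‖Aa α‖ * ‖FourierTransform.fourier g (x / Real.sin α)‖)
      (cocompact ℝ) (nhds 0) := by
    have := (tendsto_const_nhds (x := ‖Aa α‖) (f := cocompact ℝ)).mul h1.norm
    simpa using this
  exact h2.congr (fun x => (hnorm x).symm)
end

section
/- If f ∈ L^1(R), α is not an integer multiple of π, and the FRFT F_α f is an odd function, then for all 0 < ε < N, |∫_ε^N (F_α f)(x) x^{−1} e^{−πix² cot α} dx| ≤ 4 |A_α| ‖f‖_{L^1}. -/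
open MeasureTheory Complex Real Filter

section SineIntegral

lemma uIcc_pos {a b x : ℝ} (ha : 0 < a) (hb : 0 < b) (hx : x ∈ Set.uIcc a b) : 0 < x := by
  rcases Set.mem_uIcc.1 hx with h | h
  · exact lt_of_lt_of_le ha h.1
  · exact lt_of_lt_of_le hb h.1

lemma sinc_intble {a b : ℝ} (ha : 0 < a) (hb : 0 < b) :
    IntervalIntegrable (fun x => Real.sin x / x) volume a b := by
  apply ContinuousOn.intervalIntegrable
  exact ContinuousOn.div (Real.continuous_sin.continuousOn) continuousOn_id
    (fun x hx => ne_of_gt (uIcc_pos ha hb hx))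

lemma invsq_intble {a b : ℝ} (ha : 0 < a) (hb : 0 < b) :
    IntervalIntegrable (fun x : ℝ => (x^2)⁻¹) volume a b := by
  apply ContinuousOn.intervalIntegrable
  exact ContinuousOn.inv₀ (by fun_prop)
    (fun x hx => pow_ne_zero _ (ne_of_gt (uIcc_pos ha hb hx)))

lemma case_small {a b : ℝ} (ha : 0 < a) (hab : a ≤ b) (hb : b ≤ 2) :
    |∫ x in a..b, Real.sin x / x| ≤ 2 := by
  have h := intervalIntegral.norm_integral_le_of_norm_le_const (C := 1)
    (f := fun x => Real.sin x / x) (a := a) (b := b) ?_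
  · calc |∫ x in a..b, Real.sin x / x| ≤ 1 * |b - a| := h
      _ = b - a := by rw [one_mul, _root_.abs_of_nonneg (by linarith)]
      _ ≤ 2 := by linarith
  · intro x hx
    rw [Set.uIoc_of_le hab] at hx
    have hx0 : 0 < x := lt_of_lt_of_le ha (le_of_lt hx.1)
    rw [Real.norm_eq_abs, abs_div, div_le_one (abs_pos.2 (ne_of_gt hx0))]
    exact Real.abs_sin_le_abs

lemma int_invsq {a b : ℝ} (ha : 0 < a) (hab : a ≤ b) :
    ∫ x in a..b, (x^2)⁻¹ = a⁻¹ - b⁻¹ := by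
  have hb : 0 < b := lt_of_lt_of_le ha hab
  have := intervalIntegral.integral_eq_sub_of_hasDerivAt
    (f := fun x : ℝ => -x⁻¹) (f' := fun x : ℝ => (x^2)⁻¹) (a := a) (b := b) ?_
    (invsq_intble ha hb)
  · rw [this]; ring
  · intro x hx
    have hx0 : x ≠ 0 := ne_of_gt (uIcc_pos ha hb hx)
    have h := (hasDerivAt_inv hx0).neg
    convert h using 1
    · rfl
    · rw [neg_neg]

lemma case_large {a b : ℝ} (ha : 2 ≤ a) (hab : a ≤ b) :
    |∫ x in a..b, Real.sin x / x| ≤ 1 := by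
  have ha0 : (0:ℝ) < a := by linarith
  have hb0 : (0:ℝ) < b := by linarith
  have hne : ∀ x ∈ Set.uIcc a b, x ≠ 0 := fun x hx => ne_of_gt (uIcc_pos ha0 hb0 hx)
  have hparts := intervalIntegral.integral_mul_deriv_eq_deriv_mul
      (u := fun x : ℝ => x⁻¹) (u' := fun x : ℝ => -(x^2)⁻¹)
      (v := fun x => -Real.cos x) (v' := fun x => Real.sin x)
      (fun x hx => by simpa [sq] using (hasDerivAt_inv (hne x hx)))
      (fun x hx => (Real.hasDerivAt_cos x).neg.congr_deriv (neg_neg _))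
      ((invsq_intble ha0 hb0).neg)
      (Real.continuous_sin.intervalIntegrable a b)
      (a := a) (b := b)
  have heq : ∫ x in a..b, Real.sin x / x =
      a⁻¹ * Real.cos a - b⁻¹ * Real.cos b - ∫ x in a..b, (x^2)⁻¹ * Real.cos x := by
    have h1 : ∀ x, Real.sin x / x = x⁻¹ * Real.sin x := fun x => by rw [div_eq_mul_inv]; ring
    simp only [h1]
    rw [hparts]
    have h2 : (∫ x in a..b, -(x^2)⁻¹ * -Real.cos x) = ∫ x in a..b, (x^2)⁻¹ * Real.cos x := by
      congr 1; funext x; ring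
    rw [h2]; ring
  have hbnd : |∫ x in a..b, (x^2)⁻¹ * Real.cos x| ≤ a⁻¹ - b⁻¹ := by
    rw [← int_invsq ha0 hab]
    have := intervalIntegral.norm_integral_le_integral_norm
      (f := fun x => (x^2)⁻¹ * Real.cos x) (μ := volume) hab
    refine le_trans this ?_
    apply intervalIntegral.integral_mono_on hab ?_ (invsq_intble ha0 hb0)
    · intro x hx
      have hx0 : 0 < x := lt_of_lt_of_le ha0 hx.1
      rw [Real.norm_eq_abs, abs_mul, _root_.abs_of_nonneg (by positivity : (0:ℝ) ≤ (x^2)⁻¹)]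
      calc (x^2)⁻¹ * |Real.cos x| ≤ (x^2)⁻¹ * 1 := by
            apply mul_le_mul_of_nonneg_left (Real.abs_cos_le_one x) (by positivity)
        _ = (x^2)⁻¹ := mul_one _
    · apply IntervalIntegrable.norm
      apply ContinuousOn.intervalIntegrable
      exact (ContinuousOn.inv₀ (by fun_prop)
        (fun x hx => pow_ne_zero _ (ne_of_gt (uIcc_pos ha0 hb0 hx)))).mul
        Real.continuous_cos.continuousOn
  have h1 : |a⁻¹ * Real.cos a| ≤ a⁻¹ := by
    rw [abs_mul, _root_.abs_of_nonneg (by positivity : (0:ℝ) ≤ a⁻¹)]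
    calc a⁻¹ * |Real.cos a| ≤ a⁻¹ * 1 := mul_le_mul_of_nonneg_left (Real.abs_cos_le_one a) (by positivity)
      _ = a⁻¹ := mul_one _
  have h2 : |b⁻¹ * Real.cos b| ≤ b⁻¹ := by
    rw [abs_mul, _root_.abs_of_nonneg (by positivity : (0:ℝ) ≤ b⁻¹)]
    calc b⁻¹ * |Real.cos b| ≤ b⁻¹ * 1 := mul_le_mul_of_nonneg_left (Real.abs_cos_le_one b) (by positivity)
      _ = b⁻¹ := mul_one _
  have ha2 : a⁻¹ ≤ 1/2 := by
    rw [inv_le_comm₀ ha0 (by norm_num)]; linarith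
  have hbinv : (0:ℝ) ≤ b⁻¹ := by positivity
  have habinv : b⁻¹ ≤ a⁻¹ := by
    apply inv_anti₀ ha0 hab
  calc |∫ x in a..b, Real.sin x / x| ≤ |a⁻¹ * Real.cos a| + |b⁻¹ * Real.cos b|
        + |∫ x in a..b, (x^2)⁻¹ * Real.cos x| := by
        rw [heq]; exact (abs_sub _ _).trans (by gcongr; exact abs_sub _ _) |>.trans (le_refl _)
    _ ≤ a⁻¹ + b⁻¹ + (a⁻¹ - b⁻¹) := by gcongr
    _ = 2 * a⁻¹ := by ring
    _ ≤ 1 := by linarith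

lemma sinint_bound {a b : ℝ} (ha : 0 < a) (hab : a ≤ b) :
    |∫ x in a..b, Real.sin x / x| ≤ 4 := by
  rcases le_or_gt b 2 with hb | hb
  · linarith [case_small ha hab hb]
  rcases le_or_gt 2 a with ha2 | ha2
  · linarith [case_large ha2 hab]
  · have hsplit : (∫ x in a..b, Real.sin x / x)
        = (∫ x in a..(2:ℝ), Real.sin x / x) + ∫ x in (2:ℝ)..b, Real.sin x / x := by
      rw [intervalIntegral.integral_add_adjacent_intervals (sinc_intble ha (by norm_num))
        (sinc_intble (by norm_num) (by linarith))]
    rw [hsplit]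
    have h1 := case_small ha (le_of_lt ha2) (le_refl 2)
    have h2 := case_large (le_refl 2) (le_of_lt hb)
    calc |(∫ x in a..(2:ℝ), Real.sin x / x) + ∫ x in (2:ℝ)..b, Real.sin x / x|
        ≤ |∫ x in a..(2:ℝ), Real.sin x / x| + |∫ x in (2:ℝ)..b, Real.sin x / x| := abs_add_le _ _
      _ ≤ 4 := by linarith

lemma sinint_scaled_bound (γ : ℝ) {a b : ℝ} (ha : 0 < a) (hab : a ≤ b) :
    |∫ x in a..b, Real.sin (γ * x) / x| ≤ 4 := by
  have hb : 0 < b := lt_of_lt_of_le ha hab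
  -- main case γ > 0
  have key : ∀ γ : ℝ, 0 < γ → |∫ x in a..b, Real.sin (γ * x) / x| ≤ 4 := by
    intro γ hγ
    have hcongr : (∫ x in a..b, Real.sin (γ * x) / x)
        = ∫ x in a..b, γ * ((fun u => Real.sin u / u) (γ * x)) := by
      apply intervalIntegral.integral_congr
      intro x hx
      have hx0 : 0 < x := uIcc_pos ha hb hx
      field_simp
    rw [hcongr, intervalIntegral.integral_const_mul, ← smul_eq_mul,
      intervalIntegral.smul_integral_comp_mul_left (fun u => Real.sin u / u) γ]
    exact sinint_bound (by positivity) (by nlinarith)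
  rcases lt_trichotomy γ 0 with hγ | hγ | hγ
  · have : (∫ x in a..b, Real.sin (γ * x) / x) = -∫ x in a..b, Real.sin (-γ * x) / x := by
      rw [← intervalIntegral.integral_neg]
      apply intervalIntegral.integral_congr
      intro x _
      simp [neg_mul, Real.sin_neg, neg_div]
    rw [this, abs_neg]
    exact key (-γ) (by linarith)
  · simp [hγ]
  · exact key γ hγ

end SineIntegral


noncomputable def cc (α : ℝ) : ℝ := (Real.sin α)⁻¹
noncomputable def kk (α : ℝ) : ℝ := Real.cot α
noncomputable def EE (r : ℝ) : ℂ := Complex.exp ((r : ℂ) * Complex.I)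
noncomputable def Ex (α : ℝ) (x : ℝ) : ℂ :=
  Complex.exp (-(Real.pi : ℂ) * Complex.I * (x:ℂ)^2 * (Real.cot α : ℂ))

lemma EE_norm (r : ℝ) : ‖EE r‖ = 1 := by
  rw [EE, Complex.norm_exp_ofReal_mul_I]

lemma kernel_identity (α x t : ℝ) :
    frftKernel α x t * Ex α x
      = Aa α * (EE (Real.pi * t^2 * kk α) * EE (-(2 * Real.pi * cc α * t * x))) := by
  rw [frftKernel, Ex, EE, EE, mul_assoc, ← Complex.exp_add, ← Complex.exp_add]
  congr 1
  rw [kk, cc]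
  push_cast
  ring

lemma Ex_even (α x : ℝ) : Ex α (-x) = Ex α x := by
  rw [Ex, Ex]; push_cast; ring_nf

-- integrability of the modulated integrand
lemma mod_integrable (α : ℝ) {f : ℝ → ℂ} (hf : Integrable f) (x : ℝ) (s : ℝ) :
    Integrable (fun t : ℝ => Aa α * (EE (Real.pi * t^2 * kk α) * EE (s * t * x)) * f t) := by
  apply Integrable.bdd_mul (c := ‖Aa α‖) hf
  · apply Continuous.aestronglyMeasurable
    apply Continuous.mul continuous_const
    apply Continuous.mul
    · exact Complex.continuous_exp.comp (by continuity)
    · exact Complex.continuous_exp.comp (by continuity)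
  · refine Filter.Eventually.of_forall (fun t => ?_)
    rw [norm_mul, norm_mul, EE_norm, EE_norm]
    simp

-- Step 2: representation of frft * Ex as single integral
lemma frft_mul_Ex (α : ℝ) {f : ℝ → ℂ} (hf : Integrable f) (x : ℝ) :
    frft α f x * Ex α x
      = ∫ t : ℝ, Aa α * (EE (Real.pi * t^2 * kk α) * EE ((-(2 * Real.pi * cc α) * t) * x)) * f t := by
  rw [frft, ← MeasureTheory.integral_mul_const]
  congr 1
  funext t
  have := kernel_identity α x t
  calc frftKernel α x t * f t * Ex α x = (frftKernel α x t * Ex α x) * f t := by ring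
    _ = _ := by rw [this]; ring_nf

-- Step 3: the symmetrized (sine) representation
lemma frft_mul_Ex_sin (α : ℝ) {f : ℝ → ℂ} (hf : Integrable f)
    (hodd : ∀ x : ℝ, frft α f (-x) = - frft α f x) (x : ℝ) :
    frft α f x * Ex α x
      = ∫ t : ℝ, (-Complex.I) * Aa α * (Real.sin ((2 * Real.pi * cc α * t) * x) : ℂ)
          * (EE (Real.pi * t^2 * kk α) * f t) := by
  have h1 := frft_mul_Ex α hf x
  have h2 := frft_mul_Ex α hf (-x)
  rw [hodd x, Ex_even] at h2
  -- h2 : -frft α f x * Ex α x = ∫ t, Aa α * (EE .. * EE ((-(2πc) t) * (-x))) * f t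
  have h2' : frft α f x * Ex α x
      = - ∫ t : ℝ, Aa α * (EE (Real.pi * t^2 * kk α) * EE (((2 * Real.pi * cc α) * t) * x)) * f t := by
    rw [← MeasureTheory.integral_neg]
    have : ∀ t : ℝ, (-(2 * Real.pi * cc α) * t) * (-x) = ((2 * Real.pi * cc α) * t) * x := by
      intro t; ring
    simp only [this] at h2
    have := h2
    calc frft α f x * Ex α x = -(- frft α f x * Ex α x) := by ring
      _ = _ := by rw [this]; rw [← MeasureTheory.integral_neg]
  have hI1 := mod_integrable α hf x (-(2 * Real.pi * cc α))
  have hI2 := mod_integrable α hf x (2 * Real.pi * cc α)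
  have hsum : (2:ℂ) * (frft α f x * Ex α x)
      = ∫ t : ℝ, (Aa α * (EE (Real.pi * t^2 * kk α) * EE ((-(2 * Real.pi * cc α) * t) * x)) * f t
          - Aa α * (EE (Real.pi * t^2 * kk α) * EE (((2 * Real.pi * cc α) * t) * x)) * f t) := by
    rw [MeasureTheory.integral_sub hI1 hI2]
    linear_combination h1 + h2'
  have hpt : ∀ t : ℝ,
      Aa α * (EE (Real.pi * t^2 * kk α) * EE ((-(2 * Real.pi * cc α) * t) * x))* f t
        - Aa α * (EE (Real.pi * t^2 * kk α) * EE (((2 * Real.pi * cc α) * t) * x)) * f t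
      = (2:ℂ) * ((-Complex.I) * Aa α * (Real.sin ((2 * Real.pi * cc α * t) * x) : ℂ)
          * (EE (Real.pi * t^2 * kk α) * f t)) := by
    intro t
    have key : EE ((-(2 * Real.pi * cc α) * t) * x) - EE (((2 * Real.pi * cc α) * t) * x)
        = (2:ℂ) * (-Complex.I) * (Real.sin ((2 * Real.pi * cc α * t) * x) : ℂ) := by
      set θ : ℝ := ((2 * Real.pi * cc α) * t) * x with hθ
      have hneg : (-(2 * Real.pi * cc α) * t) * x = -θ := by rw [hθ]; ring
      rw [hneg, EE, EE]
      push_cast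
      rw [Complex.exp_mul_I, Complex.exp_mul_I]
      simp [Complex.cos_neg, Complex.sin_neg]
      try ring
    calc _ = Aa α * (EE (Real.pi * t^2 * kk α)
          * (EE ((-(2 * Real.pi * cc α) * t) * x) - EE (((2 * Real.pi * cc α) * t) * x))) * f t := by ring
      _ = _ := by rw [key]; ring
  rw [funext hpt] at hsum
  rw [MeasureTheory.integral_const_mul] at hsum
  linear_combination hsum / 2

-- Step 4: pointwise representation of the truncated integrand
lemma integrand_rep (α : ℝ) {f : ℝ → ℂ} (hf : Integrable f)
    (hodd : ∀ x : ℝ, frft α f (-x) = - frft α f x) (x : ℝ) :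
    frft α f x / (x : ℂ) * Ex α x
      = ∫ t : ℝ, (-Complex.I) * Aa α * ((Real.sin ((2 * Real.pi * cc α * t) * x) / x : ℝ) : ℂ)
          * (EE (Real.pi * t^2 * kk α) * f t) := by
  have h0 : frft α f x / (x : ℂ) * Ex α x = ((x:ℝ) : ℂ)⁻¹ * (frft α f x * Ex α x) := by ring
  rw [h0, frft_mul_Ex_sin α hf hodd x, ← MeasureTheory.integral_const_mul]
  congr 1
  funext t
  push_cast
  ring

theorem frft_odd_truncated_bound' (f : ℝ → ℂ) (hf : Integrable f) (α : ℝ)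
    (hodd : ∀ x : ℝ, frft α f (-x) = - frft α f x) :
    ∀ ε N : ℝ, 0 < ε → ε < N →
      ‖∫ x in ε..N, frft α f x / (x : ℂ) * Ex α x‖ ≤
        4 * ‖Aa α‖ * ∫ t : ℝ, ‖f t‖ := by
  intro ε N hε hεN
  set W : ℝ → ℝ → ℂ := fun x t => (-Complex.I) * Aa α
      * ((Real.sin ((2 * Real.pi * cc α * t) * x) / x : ℝ) : ℂ)
      * (EE (Real.pi * t^2 * kk α) * f t) with hW
  have hrep : ∀ x : ℝ, frft α f x / (x : ℂ) * Ex α x = ∫ t : ℝ, W x t :=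
    fun x => integrand_rep α hf hodd x
  rw [intervalIntegral.integral_of_le hεN.le]
  rw [MeasureTheory.setIntegral_congr_fun measurableSet_Ioc
    (fun x _ => hrep x)]
  -- Fubini
  have hmeas : AEStronglyMeasurable (Function.uncurry W)
      ((volume.restrict (Set.Ioc ε N)).prod volume) := by
    have hm : Measurable (fun p : ℝ × ℝ => (-Complex.I) * Aa α
        * ((Real.sin ((2 * Real.pi * cc α * p.2) * p.1) / p.1 : ℝ) : ℂ)
        * EE (Real.pi * p.2^2 * kk α)) := by
      apply Measurable.mul
      · apply Measurable.mul measurable_const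
        apply Complex.measurable_ofReal.comp
        exact (Real.continuous_sin.measurable.comp (by fun_prop)).div measurable_fst
      · exact Complex.measurable_exp.comp (by fun_prop)
    have hf2 : AEStronglyMeasurable (fun p : ℝ × ℝ => f p.2)
        ((volume.restrict (Set.Ioc ε N)).prod volume) :=
      hf.1.comp_quasiMeasurePreserving MeasureTheory.Measure.quasiMeasurePreserving_snd
    have : Function.uncurry W = fun p : ℝ × ℝ => ((-Complex.I) * Aa α
        * ((Real.sin ((2 * Real.pi * cc α * p.2) * p.1) / p.1 : ℝ) : ℂ)
        * EE (Real.pi * p.2^2 * kk α)) * f p.2 := by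
      funext p
      simp only [Function.uncurry, hW]
      ring
    rw [this]
    exact hm.aestronglyMeasurable.mul hf2
  have hbound : Integrable (fun p : ℝ × ℝ => (‖Aa α‖ / ε) * ‖f p.2‖)
      ((volume.restrict (Set.Ioc ε N)).prod volume) := by
    apply MeasureTheory.Integrable.mul_prod (f := fun _ : ℝ => ‖Aa α‖ / ε)
      (g := fun t : ℝ => ‖f t‖)
    · exact integrableOn_const measure_Ioc_lt_top.ne
    · exact hf.norm
  have hInt : Integrable (Function.uncurry W)
      ((volume.restrict (Set.Ioc ε N)).prod volume) := by
    apply MeasureTheory.Integrable.mono' hbound hmeas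
    rw [MeasureTheory.Measure.restrict_prod_eq_prod_univ]
    rw [MeasureTheory.ae_restrict_iff' (measurableSet_Ioc.prod MeasurableSet.univ)]
    apply Filter.Eventually.of_forall
    rintro ⟨x, t⟩ hp
    have hx : x ∈ Set.Ioc ε N := hp.1
    have hx0 : 0 < x := lt_trans hε hx.1
    simp only [Function.uncurry, hW]
    simp only [norm_mul, norm_neg, Complex.norm_I, one_mul, Complex.norm_real,
      EE_norm, Real.norm_eq_abs]
    have h1 : |Real.sin ((2 * Real.pi * cc α * t) * x) / x| ≤ 1/ε := by
      rw [abs_div, _root_.abs_of_pos hx0]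
      exact div_le_div₀ zero_le_one
        (abs_le.2 ⟨Real.neg_one_le_sin _, Real.sin_le_one _⟩) hε hx.1.le
    have h2 := mul_le_mul_of_nonneg_right
      (mul_le_mul_of_nonneg_left h1 (norm_nonneg (Aa α))) (norm_nonneg (f t))
    refine le_trans h2 (le_of_eq ?_)
    ring
  rw [MeasureTheory.integral_integral_swap hInt]
  -- inner integral evaluation
  have hinner : ∀ t : ℝ, (∫ x in Set.Ioc ε N, W x t)
      = ((-Complex.I) * Aa α * (EE (Real.pi * t^2 * kk α) * f t))
        * (((∫ x in ε..N, Real.sin ((2 * Real.pi * cc α * t) * x) / x) : ℝ) : ℂ) := by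
    intro t
    rw [← intervalIntegral.integral_of_le hεN.le]
    have : ∀ x : ℝ, W x t = ((-Complex.I) * Aa α * (EE (Real.pi * t^2 * kk α) * f t))
        * ((Real.sin ((2 * Real.pi * cc α * t) * x) / x : ℝ) : ℂ) := by
      intro x; simp only [hW]; ring
    simp only [this]
    rw [intervalIntegral.integral_const_mul, intervalIntegral.integral_ofReal]
  simp only [hinner]
  -- final bound
  apply le_trans (MeasureTheory.norm_integral_le_of_norm_le
    (g := fun t : ℝ => (4 * ‖Aa α‖) * ‖f t‖) (hf.norm.const_mul _) ?_)
  · rw [MeasureTheory.integral_const_mul]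
  · apply Filter.Eventually.of_forall
    intro t
    simp only [norm_mul, norm_neg, Complex.norm_I, one_mul, Complex.norm_real,
      EE_norm, Real.norm_eq_abs, mul_one]
    have hS := sinint_scaled_bound (2 * Real.pi * cc α * t) hε hεN.le
    have h2 := mul_le_mul_of_nonneg_left hS
      (by positivity : (0:ℝ) ≤ ‖Aa α‖ * ‖f t‖)
    refine le_trans (le_of_eq ?_) (le_trans h2 (le_of_eq ?_)) <;> ring

theorem frft_odd_truncated_bound (f : ℝ → ℂ) (hf : Integrable f) (α : ℝ)
    (hα : ∀ n : ℤ, α ≠ n * Real.pi)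
    (hodd : ∀ x : ℝ, frft α f (-x) = - frft α f x) :
    ∀ ε N : ℝ, 0 < ε → ε < N →
      ‖∫ x in ε..N, frft α f x / (x : ℂ) *
          Complex.exp (-(Real.pi : ℂ) * Complex.I * (x : ℂ)^2 * (Real.cot α : ℂ))‖ ≤
        4 * ‖Aa α‖ * ∫ t : ℝ, ‖f t‖ := by
  intro ε N hε hεN
  have h := frft_odd_truncated_bound' f hf α hodd ε N hε hεN
  simpa only [Ex] using h
end

section
/- Let α not be an integer multiple of π, f ∈ L^1(R), Φ ∈ L^1(R), and set φ = FΦ (classical Fourier transform), Φ_α(x) = Φ(x csc α). Then for every ε > 0 and t ∈ R, ∫_R (F_α f)(x) K_{−α}(x,t) Φ_α(εx) dx = (f ∗_α φ̃_ε)(t), where φ̃(x) = φ(−x) and φ̃_ε(x) = ε^{−1}φ̃(x/ε). -/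
open MeasureTheory Complex Real Filter
open scoped ENNReal

noncomputable def fconv (α : ℝ) (f g : ℝ → ℂ) (x : ℝ) : ℂ :=
  Complex.exp (-(Real.pi : ℂ) * Complex.I * (x : ℂ)^2 * (Real.cot α : ℂ)) *
    ∫ t : ℝ, Complex.exp ((Real.pi : ℂ) * Complex.I * (t : ℂ)^2 * (Real.cot α : ℂ)) *
      f t * g (x - t)

noncomputable def dil (ε : ℝ) (φ : ℝ → ℂ) (x : ℝ) : ℂ := (ε : ℂ)⁻¹ * φ (x / ε)

noncomputable def classicalFT (g : ℝ → ℂ) (x : ℝ) : ℂ :=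
  ∫ t : ℝ, g t * Complex.exp (-2 * Real.pi * Complex.I * (x : ℂ) * (t : ℂ))

lemma real_cot_neg (α : ℝ) : Real.cot (-α) = -Real.cot α := by
  simp [Real.cot_eq_cos_div_sin, Real.cos_neg, Real.sin_neg, neg_div, div_neg]

lemma Aa_mul_Aa_neg (α : ℝ) (hs : Real.sin α ≠ 0) :
    Aa α * Aa (-α) = ((|Real.sin α|⁻¹ : ℝ) : ℂ) := by
  unfold Aa
  rw [real_cot_neg]
  set c : ℝ := Real.cot α with hc
  set z : ℂ := 1 - Complex.I * (c:ℂ) with hz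
  have hzre : z.re = 1 := by simp [hz]
  have hz0 : z ≠ 0 := by
    intro h; rw [h] at hzre; simp at hzre
  have hconj : (starRingEnd ℂ) z = 1 - Complex.I * ((-c : ℝ):ℂ) := by
    simp [hz, map_sub, map_mul, Complex.conj_I]
  have harg : z.arg ≠ Real.pi := by
    intro h
    have := Complex.arg_eq_pi_iff.mp h
    rw [hzre] at this; linarith [this.1]
  rw [← hconj]
  rw [Complex.cpow_def_of_ne_zero hz0, Complex.cpow_def_of_ne_zero (by simpa using hz0),
    Complex.log_conj _ harg, ← Complex.exp_add]
  have : Complex.log z * (1/2) + (starRingEnd ℂ) (Complex.log z) * (1/2)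
      = (((Complex.log z).re : ℝ) : ℂ) := by
    rw [← add_mul, Complex.add_conj]; push_cast; ring
  rw [this, Complex.log_re, ← Complex.ofReal_exp, Real.exp_log (norm_pos_iff.mpr hz0)]
  congr 1
  have habs : ‖z‖ = Real.sqrt (1 + c^2) := by
    rw [Complex.norm_def, Complex.normSq_apply]
    simp [hz]
    ring_nf
  rw [habs]
  have h1 : 1 + c^2 = (|Real.sin α|⁻¹)^2 := by
    rw [hc, Real.cot_eq_cos_div_sin]
    have habs2 : (|Real.sin α|⁻¹)^2 = ((Real.sin α)^2)⁻¹ := by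
      rw [← abs_inv, _root_.sq_abs, inv_pow]
    rw [habs2]
    field_simp
    linarith [Real.sin_sq_add_cos_sq α]
  rw [h1, Real.sqrt_sq (by positivity)]

lemma norm_frftKernel (α : ℝ) (x t : ℝ) : ‖frftKernel α x t‖ = ‖Aa α‖ := by
  unfold frftKernel
  rw [norm_mul]
  have h : (2 * (Real.pi:ℂ) * Complex.I *
      (((t : ℂ)^2/2) * (Real.cot α : ℂ) - (x : ℂ) * (t : ℂ) * ((Real.sin α : ℂ))⁻¹
        + ((x : ℂ)^2/2) * (Real.cot α : ℂ)))
      = ((2*Real.pi*((t^2/2) * Real.cot α - x*t*(Real.sin α)⁻¹ + (x^2/2)*Real.cot α) : ℝ) : ℂ)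
          * Complex.I := by push_cast; ring
  rw [h]
  rw [Complex.norm_exp_ofReal_mul_I, mul_one]

lemma exp_combine (a1 a2 a3 a4 a5 : ℂ) (P Q F G : ℂ) (h : a1 + a2 = a3 + a4 + a5) :
    P * Complex.exp a1 * F * (Q * Complex.exp a2 * G)
      = P * Q * (Complex.exp a3 * (Complex.exp a4 * F * (Complex.exp a5 * G))) := by
  have h2 : Complex.exp a3 * (Complex.exp a4 * F * (Complex.exp a5 * G))
      = Complex.exp (a3 + a4 + a5) * (F * G) := by
    rw [Complex.exp_add, Complex.exp_add]; ring
  rw [h2, ← h, Complex.exp_add]; ring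

lemma continuous_frftKernel (α : ℝ) : Continuous (fun p : ℝ × ℝ => frftKernel α p.1 p.2) := by
  unfold frftKernel
  fun_prop

theorem frft_phi_means_eq_fconv (α : ℝ) (hα : ∀ n : ℤ, α ≠ n * Real.pi)
    (f : ℝ → ℂ) (hf : Integrable f) (Φ : ℝ → ℂ) (hΦ : Integrable Φ)
    (ε : ℝ) (hε : 0 < ε) (t : ℝ) :
    (∫ x : ℝ, frft α f x * frftKernel (-α) x t * Φ ((ε * x) * (Real.sin α)⁻¹)) =
      fconv α f (dil ε (fun x => classicalFT Φ (-x))) t := by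
  have hs : Real.sin α ≠ 0 := by
    intro h
    rcases Real.sin_eq_zero_iff.mp h with ⟨n, hn⟩
    exact hα n hn.symm
  set s : ℝ := Real.sin α with hsdef
  set c : ℝ := Real.cot α with hcdef
  have hε0 : ε ≠ 0 := ne_of_gt hε
  have hk : ε * s⁻¹ ≠ 0 := mul_ne_zero hε0 (inv_ne_zero hs)
  -- the auxiliary function
  set g : ℝ → ℝ → ℂ := fun u y =>
    Complex.exp ((2 * Real.pi * ((t - u)/ε) : ℝ) * Complex.I * (y:ℂ)) * Φ y with hg
  -- Step 1: pointwise rewriting of the integrand as a double integral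
  have step1 : ∀ x : ℝ, frft α f x * frftKernel (-α) x t * Φ ((ε * x) * s⁻¹)
      = ∫ u : ℝ, frftKernel α x u * f u * (frftKernel (-α) x t * Φ ((ε * x) * s⁻¹)) := by
    intro x
    rw [mul_assoc]
    unfold frft
    rw [← integral_mul_const]
  -- key pointwise identity
  have key : ∀ x u : ℝ, frftKernel α x u * f u * (frftKernel (-α) x t * Φ ((ε * x) * s⁻¹))
      = (Aa α * Aa (-α)) *
        (Complex.exp (-(Real.pi : ℂ) * Complex.I * (t : ℂ)^2 * (c : ℂ)) *
          (Complex.exp ((Real.pi : ℂ) * Complex.I * (u : ℂ)^2 * (c : ℂ)) * f u *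
            g u ((ε * s⁻¹) * x))) := by
    intro x u
    unfold frftKernel
    rw [hg]
    have harg : ((ε * s⁻¹) * x) = ((ε * x) * s⁻¹) := by ring
    rw [harg]
    rw [real_cot_neg, Real.sin_neg]
    rw [← hcdef, ← hsdef]
    push_cast
    have hεC : (ε : ℂ) ≠ 0 := Complex.ofReal_ne_zero.mpr hε0
    apply exp_combine
    field_simp
    ring
  -- integrability of the double integrand
  have hΦc : Integrable (fun x : ℝ => Φ ((ε * x) * s⁻¹)) := by
    have h1 : (fun x : ℝ => Φ ((ε * x) * s⁻¹)) = fun x : ℝ => Φ ((ε * s⁻¹) * x) := by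
      funext x; congr 1; ring
    rw [h1]
    exact hΦ.comp_mul_left' hk
  have hbase : Integrable (fun p : ℝ × ℝ => Φ ((ε * p.1) * s⁻¹) * f p.2)
      (volume.prod volume) := hΦc.mul_prod hf
  have hGint : Integrable (Function.uncurry fun x u =>
      frftKernel α x u * f u * (frftKernel (-α) x t * Φ ((ε * x) * s⁻¹)))
      (volume.prod volume) := by
    have heq : (Function.uncurry fun x u =>
        frftKernel α x u * f u * (frftKernel (-α) x t * Φ ((ε * x) * s⁻¹)))
        = fun p : ℝ × ℝ => (frftKernel α p.1 p.2 * frftKernel (-α) p.1 t) *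
            (Φ ((ε * p.1) * s⁻¹) * f p.2) := by
      funext p
      simp only [Function.uncurry]
      ring
    rw [heq]
    refine hbase.bdd_mul (c := ‖Aa α‖ * ‖Aa (-α)‖) ?_ ?_
    · exact ((continuous_frftKernel α).mul
        ((continuous_frftKernel (-α)).comp
          (by fun_prop : Continuous fun p : ℝ × ℝ => (p.1, t)))).aestronglyMeasurable
    · refine ae_of_all _ fun p => ?_
      rw [norm_mul, norm_frftKernel, norm_frftKernel]
  -- value of ∫ y, g u y
  have hFT : ∀ u : ℝ, (∫ y : ℝ, g u y) = classicalFT Φ (-((t - u)/ε)) := by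
    intro u
    unfold classicalFT
    refine integral_congr_ae (ae_of_all _ fun y => ?_)
    rw [hg]
    simp only []
    rw [mul_comm]
    congr 1
    push_cast
    ring
  -- the combined constant
  have habs0 : |s| ≠ 0 := abs_ne_zero.mpr hs
  have hconst : (Aa α * Aa (-α)) * ((|(ε * s⁻¹)⁻¹| : ℝ) : ℂ) = (ε : ℂ)⁻¹ := by
    rw [Aa_mul_Aa_neg α hs, ← hsdef]
    rw [show |(ε * s⁻¹)⁻¹| = |s| * ε⁻¹ by
      rw [mul_inv, inv_inv, abs_mul, abs_of_pos (inv_pos.mpr hε), mul_comm]]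
    rw [← Complex.ofReal_mul]
    rw [show |s|⁻¹ * (|s| * ε⁻¹) = ε⁻¹ by
      rw [← mul_assoc, inv_mul_cancel₀ habs0, one_mul]]
    rw [Complex.ofReal_inv]
  calc (∫ x : ℝ, frft α f x * frftKernel (-α) x t * Φ ((ε * x) * s⁻¹))
      = ∫ x : ℝ, ∫ u : ℝ,
          frftKernel α x u * f u * (frftKernel (-α) x t * Φ ((ε * x) * s⁻¹)) :=
        integral_congr_ae (ae_of_all _ step1)
    _ = ∫ u : ℝ, ∫ x : ℝ,
          frftKernel α x u * f u * (frftKernel (-α) x t * Φ ((ε * x) * s⁻¹)) :=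
        integral_integral_swap hGint
    _ = ∫ u : ℝ, Complex.exp (-(Real.pi : ℂ) * Complex.I * (t : ℂ)^2 * (c : ℂ)) *
          (Complex.exp ((Real.pi : ℂ) * Complex.I * (u : ℂ)^2 * (c : ℂ)) * f u *
            ((ε : ℂ)⁻¹ * classicalFT Φ (-((t - u)/ε)))) := by
        refine integral_congr_ae (ae_of_all _ fun u => ?_)
        simp only [key]
        rw [integral_const_mul, integral_const_mul, integral_const_mul]
        rw [MeasureTheory.Measure.integral_comp_mul_left (g u) (ε * s⁻¹)]
        rw [hFT u]
        rw [← mul_assoc (Aa α * Aa (-α)), mul_comm (Aa α * Aa (-α)) _]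
        rw [Complex.real_smul]
        rw [mul_assoc, mul_assoc]
        linear_combination (Complex.exp (-(Real.pi:ℂ) * Complex.I * ((t:ℂ)^2 * (c:ℂ))) *
          Complex.exp ((Real.pi:ℂ) * Complex.I * (u:ℂ)^2 * (c:ℂ)) * f u *
          classicalFT Φ (-((t - u)/ε))) * hconst
    _ = fconv α f (dil ε (fun x => classicalFT Φ (-x))) t := by
        unfold fconv dil
        rw [← integral_const_mul]
end

section
/- Let α not be an integer multiple of π, m ∈ L^∞(R) bounded, and define m̃(x) = m(x sin α). If f ∈ L^2(R) and T f := M_{−α} F^{−1}[ m̃ · F(M_α f) ], where M_α g(x) = e^{πix² cot α} g(x) and F is the classical Fourier transform on L^2, then F_α(T f)(x) = m(x)(F_α f)(x) for almost every x; consequently, if the classical Fourier multiplier operator with symbol m̃ is bounded on L^p(R) with norm C, then ‖T f‖_p ≤ C ‖f‖_p for all f ∈ L^2 ∩ L^p. -/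
open MeasureTheory Complex Real Filter
open scoped ENNReal FourierTransform

noncomputable def chirp (α : ℝ) (g : ℝ → ℂ) (x : ℝ) : ℂ :=
  Complex.exp ((Real.pi : ℂ) * Complex.I * (x : ℂ)^2 * (Real.cot α : ℂ)) * g x

noncomputable def invFT (g : ℝ → ℂ) (x : ℝ) : ℂ :=
  ∫ ξ : ℝ, g ξ * Complex.exp (2 * Real.pi * Complex.I * (x : ℂ) * (ξ : ℂ))

/-- The fractional multiplier operator `T f = M_{-α} F⁻¹ [ m̃ ⬝ F (M_α f) ]`. -/
noncomputable def Tmul (α : ℝ) (m : ℝ → ℂ) (f : ℝ → ℂ) (x : ℝ) : ℂ :=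
  Complex.exp (-(Real.pi : ℂ) * Complex.I * (x : ℂ)^2 * (Real.cot α : ℂ)) *
    invFT (fun ξ => m (ξ * Real.sin α) * classicalFT (chirp α f) ξ) x

/- ## Auxiliary lemmas -/

lemma classicalFT_eq (g : ℝ → ℂ) (x : ℝ) : classicalFT g x = 𝓕 g x := by
  rw [Real.fourier_real_eq_integral_exp_smul, classicalFT]
  congr 1; ext t
  rw [smul_eq_mul, mul_comm]
  congr 1
  push_cast
  ring_nf

lemma invFT_eq (g : ℝ → ℂ) (x : ℝ) : invFT g x = 𝓕⁻ g x := by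
  rw [Real.fourierInv_eq', invFT]
  congr 1; ext t
  rw [smul_eq_mul, mul_comm, RCLike.inner_apply, starRingEnd_apply, star_trivial]
  congr 1
  push_cast
  ring_nf

lemma norm_exp_eq_one {z : ℂ} {r : ℝ} (hz : z = (r : ℂ) * Complex.I) :
    ‖Complex.exp z‖ = 1 := by
  rw [hz]
  simpa using Complex.abs_exp_ofReal_mul_I r

lemma norm_exp_chirp (c x : ℝ) :
    ‖Complex.exp ((Real.pi : ℂ) * Complex.I * (x:ℂ)^2 * (c:ℂ))‖ = 1 :=
  norm_exp_eq_one (r := Real.pi * x^2 * c) (by push_cast; ring)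

lemma norm_exp_chirp_neg (c x : ℝ) :
    ‖Complex.exp (-(Real.pi : ℂ) * Complex.I * (x:ℂ)^2 * (c:ℂ))‖ = 1 :=
  norm_exp_eq_one (r := -(Real.pi * x^2 * c)) (by push_cast; ring)

lemma integrable_fourier_of_compactSupport {Ψ : ℝ → ℂ} (h1 : ContDiff ℝ 2 Ψ)
    (h2 : HasCompactSupport Ψ) : Integrable (𝓕 Ψ) := by
  have hD : ∀ n : ℕ, (n : ℕ∞) ≤ 2 → Integrable (iteratedFDeriv ℝ n Ψ) := fun n hn =>
    (h1.continuous_iteratedFDeriv (by exact_mod_cast hn)).integrable_of_hasCompactSupport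
      (h2.iteratedFDeriv n)
  have h'f : ∀ (k n : ℕ), (k:ℕ∞) ≤ 0 → (n:ℕ∞) ≤ 2 →
      Integrable (fun v : ℝ => ‖v‖^k * ‖iteratedFDeriv ℝ n Ψ v‖) := by
    intro k n hk hn
    have hk0 : k = 0 := Nat.le_zero.mp (by exact_mod_cast hk)
    subst hk0
    simpa using (hD n hn).norm
  set C := (2:ℝ) ^ 2 * ∑ x ∈ Finset.range 3, ∫ (v : ℝ), ‖iteratedFDeriv ℝ x Ψ v‖ with hC
  have key : ∀ w : ℝ, w ^ 2 * ‖𝓕 Ψ w‖ ≤ C := by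
    intro w
    have := Real.pow_mul_norm_iteratedFDeriv_fourier_le (K := 0) (N := 2) h1 h'f
      (k := 0) (n := 2) le_rfl le_rfl w
    simpa [norm_iteratedFDeriv_zero, Real.norm_eq_abs, _root_.sq_abs, hC] using this
  have h0 : ∀ w : ℝ, ‖𝓕 Ψ w‖ ≤ ∫ v : ℝ, ‖Ψ v‖ := fun w =>
    VectorFourier.norm_fourierIntegral_le_integral_norm _ _ _ _ _
  have hcont : Continuous (𝓕 Ψ) :=
    VectorFourier.fourierIntegral_continuous Real.continuous_fourierChar
      (by exact continuous_inner) (h1.continuous.integrable_of_hasCompactSupport h2)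
  set C0 := ∫ v : ℝ, ‖Ψ v‖ with hC0
  have hbound : ∀ w : ℝ, ‖𝓕 Ψ w‖ ≤ (C0 + C) * (1 + w ^ 2)⁻¹ := by
    intro w
    rw [← div_eq_mul_inv, le_div_iff₀ (by positivity)]
    calc ‖𝓕 Ψ w‖ * (1 + w ^ 2) = ‖𝓕 Ψ w‖ + w ^ 2 * ‖𝓕 Ψ w‖ := by ring
    _ ≤ C0 + C := add_le_add (h0 w) (key w)
  refine (integrable_inv_one_add_sq.const_mul (C0 + C)).mono' hcont.aestronglyMeasurable ?_
  filter_upwards with w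
  exact hbound w

lemma flipFT {G : ℝ → ℂ} {Ψ : ℝ → ℂ} (hG : Integrable G) (hΨ : Integrable Ψ) :
    ∫ x : ℝ, 𝓕 G x • Ψ x = ∫ x : ℝ, G x • 𝓕 Ψ x := by
  have := VectorFourier.integral_fourierIntegral_smul_eq_flip (e := Real.fourierChar)
    (L := innerₗ ℝ) (μ := volume) (ν := volume) Real.continuous_fourierChar
    (by exact continuous_inner) hG hΨ
  rw [flip_innerₗ] at this
  exact this

set_option maxHeartbeats 1000000 in
lemma ae_fourier_inversion_inv {h : ℝ → ℂ} (hh : Integrable h) (hih : Integrable (𝓕⁻ h)) :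
    ∀ᵐ x : ℝ, 𝓕 (𝓕⁻ h) x = h x := by
  have hcont : Continuous (𝓕 (𝓕⁻ h)) :=
    VectorFourier.fourierIntegral_continuous Real.continuous_fourierChar
      (by exact continuous_inner) hih
  apply ae_eq_of_integral_contDiff_smul_eq hcont.locallyIntegrable hh.locallyIntegrable
  intro g hg hgs
  set Ψ : ℝ → ℂ := fun x => (g x : ℂ) with hΨdef
  have hΨc : Continuous Ψ := Complex.continuous_ofReal.comp hg.continuous
  have hΨs : HasCompactSupport Ψ := by
    show HasCompactSupport (Complex.ofReal ∘ g)
    exact hgs.comp_left Complex.ofReal_zero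
  have hΨ2 : ContDiff ℝ 2 Ψ :=
    (Complex.ofRealCLM.contDiff (n := 2)).comp
      (hg.of_le (by exact WithTop.coe_le_coe.mpr le_top))
  have hΨint : Integrable Ψ := hΨc.integrable_of_hasCompactSupport hΨs
  have hFΨint : Integrable (𝓕 Ψ) := integrable_fourier_of_compactSupport hΨ2 hΨs
  have hinv : 𝓕⁻ (𝓕 Ψ) = Ψ := hΨc.fourierInv_fourier_eq hΨint hFΨint
  have hneg : Integrable (fun x : ℝ => h (-x)) := hh.comp_neg
  have A : ∫ x : ℝ, 𝓕 (𝓕⁻ h) x • Ψ x = ∫ x : ℝ, (𝓕⁻ h) x • 𝓕 Ψ x := flipFT hih hΨint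
  have B : ∫ x : ℝ, (𝓕⁻ h) x • 𝓕 Ψ x = ∫ x : ℝ, h x • (𝓕⁻ (𝓕 Ψ)) x := by
    rw [Real.fourierInv_eq_fourier_comp_neg h]
    rw [flipFT hneg hFΨint]
    rw [← integral_neg_eq_self (fun x : ℝ => h x • (𝓕⁻ (𝓕 Ψ) : ℝ → ℂ) x) volume]
    congr 1; ext x
    rw [Real.fourierInv_eq_fourier_neg, neg_neg]
  have key : ∫ x : ℝ, 𝓕 (𝓕⁻ h) x • Ψ x = ∫ x : ℝ, h x • Ψ x := by
    rw [A, B, hinv]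
  calc ∫ x : ℝ, g x • 𝓕 (𝓕⁻ h) x = ∫ x : ℝ, 𝓕 (𝓕⁻ h) x • Ψ x := by
        congr 1; ext x; rw [smul_eq_mul, real_smul, mul_comm]
  _ = ∫ x : ℝ, h x • Ψ x := key
  _ = ∫ x : ℝ, g x • h x := by
        congr 1; ext x; rw [smul_eq_mul, real_smul, mul_comm]

lemma frft_eq (α : ℝ) (hs : Real.sin α ≠ 0) (g : ℝ → ℂ) (x : ℝ) :
    frft α g x = Aa α * Complex.exp ((Real.pi : ℂ) * Complex.I * (x:ℂ)^2 * (Real.cot α : ℂ)) *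
      classicalFT (chirp α g) (x / Real.sin α) := by
  have hsC : (Real.sin α : ℂ) ≠ 0 := Complex.ofReal_ne_zero.mpr hs
  rw [frft, classicalFT, ← integral_const_mul]
  congr 1; ext t
  rw [frftKernel, chirp]
  have harg : (2 : ℂ) * Real.pi * Complex.I *
      (((t : ℂ)^2/2) * (Real.cot α : ℂ) - (x : ℂ) * (t : ℂ) * ((Real.sin α : ℂ))⁻¹
        + ((x : ℂ)^2/2) * (Real.cot α : ℂ)) =
      ((Real.pi : ℂ) * Complex.I * (x:ℂ)^2 * (Real.cot α : ℂ)) +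
      (((Real.pi : ℂ) * Complex.I * (t:ℂ)^2 * (Real.cot α : ℂ)) +
        (-2 * Real.pi * Complex.I * ((x / Real.sin α : ℝ) : ℂ) * (t : ℂ))) := by
    push_cast
    field_simp
    ring
  rw [harg, Complex.exp_add, Complex.exp_add]
  ring

lemma chirp_Tmul (α : ℝ) (m f : ℝ → ℂ) :
    chirp α (Tmul α m f) =
      invFT (fun ξ => m (ξ * Real.sin α) * classicalFT (chirp α f) ξ) := by
  ext x
  rw [chirp, Tmul, ← mul_assoc, ← Complex.exp_add]
  have : (Real.pi : ℂ) * Complex.I * (x:ℂ)^2 * (Real.cot α : ℂ) +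
      (-(Real.pi : ℂ) * Complex.I * (x:ℂ)^2 * (Real.cot α : ℂ)) = 0 := by ring
  rw [this, Complex.exp_zero, one_mul]

lemma ae_comp_mul_right {P : ℝ → Prop} {c : ℝ} (hc : c ≠ 0)
    (h : ∀ᵐ ξ : ℝ, P ξ) : ∀ᵐ x : ℝ, P (x * c) := by
  rw [ae_iff] at h ⊢
  have : {x : ℝ | ¬ P (x * c)} = (fun x : ℝ => x * c) ⁻¹' {ξ : ℝ | ¬ P ξ} := rfl
  rw [this, Real.volume_preimage_mul_right hc, h, mul_zero]


theorem frft_multiplier (α : ℝ) (hα : ∀ n : ℤ, α ≠ n * Real.pi)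
    (m : ℝ → ℂ) (hm : ∃ C : ℝ, ∀ x : ℝ, ‖m x‖ ≤ C)
    (f : ℝ → ℂ) (hf2 : MemLp f 2 (volume : Measure ℝ)) (hfInt : Integrable f)
    (hmInt : Integrable (fun ξ => m (ξ * Real.sin α) * classicalFT (chirp α f) ξ))
    (hTfInt : Integrable (Tmul α m f)) :
    (∀ᵐ x : ℝ, frft α (Tmul α m f) x = m x * frft α f x) ∧
    ∀ (p : ℝ≥0∞) (C : ℝ), 1 ≤ p →
      (∀ g : ℝ → ℂ, Integrable g → MemLp g p →
        Integrable (fun ξ => m (ξ * Real.sin α) * classicalFT g ξ) →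
        eLpNorm (invFT (fun ξ => m (ξ * Real.sin α) * classicalFT g ξ)) p volume ≤
          ENNReal.ofReal C * eLpNorm g p volume) →
      MemLp f p → eLpNorm (Tmul α m f) p volume ≤ ENNReal.ofReal C * eLpNorm f p volume := by

  have hs : Real.sin α ≠ 0 := by
    rw [Real.sin_ne_zero_iff]
    exact fun n => (hα n).symm
  set h : ℝ → ℂ := fun ξ => m (ξ * Real.sin α) * classicalFT (chirp α f) ξ with hdef
  have hinvFT_eq : invFT h = 𝓕⁻ h := funext fun x => invFT_eq h x
  -- Integrability of 𝓕⁻ h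
  have hihInt : Integrable (𝓕⁻ h) := by
    rw [← hinvFT_eq]
    have : Integrable (fun x : ℝ =>
        Complex.exp ((Real.pi : ℂ) * Complex.I * (x:ℂ)^2 * (Real.cot α : ℂ)) * Tmul α m f x) :=
      hTfInt.bdd_mul (Continuous.aestronglyMeasurable (by fun_prop)) (c := 1) (ae_of_all _ fun x =>
        le_of_eq (norm_exp_chirp (Real.cot α) x))
    apply this.congr
    filter_upwards with x
    rw [Tmul, ← mul_assoc, ← Complex.exp_add]
    have : (Real.pi : ℂ) * Complex.I * (x:ℂ)^2 * (Real.cot α : ℂ) +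
        (-(Real.pi : ℂ) * Complex.I * (x:ℂ)^2 * (Real.cot α : ℂ)) = 0 := by ring
    rw [this, Complex.exp_zero, one_mul]
  have hae : ∀ᵐ ξ : ℝ, 𝓕 (𝓕⁻ h) ξ = h ξ := ae_fourier_inversion_inv hmInt hihInt
  constructor
  · -- main a.e. identity
    have hae' : ∀ᵐ x : ℝ, 𝓕 (𝓕⁻ h) (x * (Real.sin α)⁻¹) = h (x * (Real.sin α)⁻¹) :=
      ae_comp_mul_right (inv_ne_zero hs) hae
    filter_upwards [hae'] with x hx
    rw [frft_eq α hs (Tmul α m f) x, frft_eq α hs f x, chirp_Tmul α m f, ← hdef,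
      hinvFT_eq, classicalFT_eq, div_eq_mul_inv, hx]
    have hx2 : h (x * (Real.sin α)⁻¹) = m x * classicalFT (chirp α f) (x * (Real.sin α)⁻¹) := by
      rw [hdef]
      simp only
      rw [show x * (Real.sin α)⁻¹ * Real.sin α = x by field_simp]
    rw [hx2]
    ring
  · -- boundedness
    intro p C hp H hfp
    have hg0Int : Integrable (chirp α f) := by
      have : Integrable (fun x : ℝ =>
          Complex.exp ((Real.pi : ℂ) * Complex.I * (x:ℂ)^2 * (Real.cot α : ℂ)) * f x) :=
        hfInt.bdd_mul (Continuous.aestronglyMeasurable (by fun_prop)) (c := 1) (ae_of_all _ fun x =>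
          le_of_eq (norm_exp_chirp (Real.cot α) x))
      exact this
    have hnorm_g0 : ∀ᵐ x : ℝ, ‖chirp α f x‖ = ‖f x‖ := by
      filter_upwards with x
      rw [chirp, norm_mul, norm_exp_chirp, one_mul]
    have hg0mem : MemLp (chirp α f) p := by
      refine ⟨(Continuous.aestronglyMeasurable (by fun_prop : Continuous (fun x : ℝ =>
        Complex.exp ((Real.pi : ℂ) * Complex.I * (x:ℂ)^2 * (Real.cot α : ℂ))))).mul hfp.1, ?_⟩
      rw [eLpNorm_congr_norm_ae hnorm_g0]
      exact hfp.2
    have key := H (chirp α f) hg0Int hg0mem hmInt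
    have e1 : eLpNorm (Tmul α m f) p volume = eLpNorm (invFT h) p volume := by
      apply eLpNorm_congr_norm_ae
      filter_upwards with x
      rw [Tmul, norm_mul, norm_exp_chirp_neg, one_mul]
    have e2 : eLpNorm (chirp α f) p volume = eLpNorm f p volume :=
      eLpNorm_congr_norm_ae hnorm_g0
    rw [e1]
    rw [e2] at key
    exact key
end
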